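/- Let δ ∈ (0, 1], M ≥ 0, and r > 0 be real numbers, and let y : ℝ → ℝ be twice differentiable with δ ≤ y(x) ≤ 1, 0 ≤ y′(x) ≤ M for all x ∈ [0, 1], and |y″(x)| ≤ y′(x)/(1 − x) for all x ∈ [0, 1). Define η(ρ) := 2 √(y(ρ/r)) for ρ ∈ [0, r]. Then there exists a constant C ≥ 0, depending only on δ and M (one may take C = 1/√δ + M/(2 δ^{3/2})), such that for every ρ ∈ [0, r) one has |η″(ρ)| ≤ C · η′(ρ)/(r − ρ). -/

import Mathlib

/-- Second radial derivative of `η = 2√(y(ρ/r))` is controlled by `η′/(r − ρ)`: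
there exists `C ≥ 0` (one may take `C = 1/√δ + M/(2 δ^(3/2))`) with
`|η″(ρ)| ≤ C η′(ρ)/(r − ρ)` for every `ρ ∈ [0, r)`. -/
theorem eta_second_deriv_bound (δ M r : ℝ) (hδ : 0 < δ) (hδ1 : δ ≤ 1) (hM : 0 ≤ M)
    (hr : 0 < r) (y : ℝ → ℝ) (hy : Differentiable ℝ y)
    (hy' : Differentiable ℝ (deriv y))
    (hbounds : ∀ x ∈ Set.Icc (0 : ℝ) 1, δ ≤ y x ∧ y x ≤ 1)
    (hderiv : ∀ x ∈ Set.Icc (0 : ℝ) 1, 0 ≤ deriv y x ∧ deriv y x ≤ M)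
    (hderiv2 : ∀ x ∈ Set.Ico (0 : ℝ) 1, |deriv (deriv y) x| ≤ deriv y x / (1 - x)) :
    ∃ C : ℝ, 0 ≤ C ∧
      ∀ ρ ∈ Set.Ico (0 : ℝ) r,
        |deriv (deriv (fun s : ℝ => 2 * Real.sqrt (y (s / r)))) ρ| ≤
          C * deriv (fun s : ℝ => 2 * Real.sqrt (y (s / r))) ρ / (r - ρ) := by
  refine ⟨1 + M / δ, by positivity, ?_⟩
  intro ρ hρ
  obtain ⟨hρ0, hρr⟩ := hρ
  have hrρ : 0 < r - ρ := by linarith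
  -- first derivative formula on the set where y(s/r) > 0
  have hU : ∀ s : ℝ, 0 < y (s / r) →
      HasDerivAt (fun t : ℝ => 2 * Real.sqrt (y (t / r)))
        (deriv y (s / r) / (r * Real.sqrt (y (s / r)))) s := by
    intro s hs
    have h1 : HasDerivAt (fun t : ℝ => t / r) (1 / r) s := by
      simpa using (hasDerivAt_id s).div_const r
    have h2 : HasDerivAt y (deriv y (s / r)) (s / r) := (hy (s / r)).hasDerivAt
    have h3 : HasDerivAt (fun t : ℝ => y (t / r)) (deriv y (s / r) * (1 / r)) s :=
      h2.comp s h1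
    have h4 : HasDerivAt Real.sqrt (1 / (2 * Real.sqrt (y (s / r)))) (y (s / r)) :=
      Real.hasDerivAt_sqrt hs.ne'
    have h5 : HasDerivAt (fun t : ℝ => Real.sqrt (y (t / r)))
        (1 / (2 * Real.sqrt (y (s / r))) * (deriv y (s / r) * (1 / r))) s := h4.comp s h3
    have h6 : HasDerivAt (fun t : ℝ => 2 * Real.sqrt (y (t / r)))
        (2 * (1 / (2 * Real.sqrt (y (s / r))) * (deriv y (s / r) * (1 / r)))) s := h5.const_mul 2
    convert h6 using 1
    have hSpos : 0 < Real.sqrt (y (s / r)) := Real.sqrt_pos.mpr hs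
    field_simp
  -- notation
  set x : ℝ := ρ / r with hxdef
  have hx0 : 0 ≤ x := by positivity
  have hx1 : x < 1 := (div_lt_one hr).mpr hρr
  have hxmem : x ∈ Set.Icc (0 : ℝ) 1 := ⟨hx0, le_of_lt hx1⟩
  obtain ⟨hya, hyb⟩ := hbounds x hxmem
  obtain ⟨hb0, hbM⟩ := hderiv x hxmem
  have hcb := hderiv2 x ⟨hx0, hx1⟩
  have hapos : 0 < y x := lt_of_lt_of_le hδ hya
  set S : ℝ := Real.sqrt (y x) with hSdef
  have hSpos : 0 < S := Real.sqrt_pos.mpr hapos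
  have hS1 : S ≤ 1 := Real.sqrt_le_one.mpr hyb
  have hSsq : S ^ 2 = y x := Real.sq_sqrt hapos.le
  have hδS : δ ≤ S ^ 2 := by rw [hSsq]; exact hya
  set b : ℝ := deriv y x with hbdef
  set c : ℝ := deriv (deriv y) x with hcdef
  -- deriv f = g eventually near ρ
  have hopen : IsOpen {s : ℝ | 0 < y (s / r)} :=
    isOpen_lt continuous_const (hy.continuous.comp (continuous_id.div_const r))
  have hmem : ρ ∈ {s : ℝ | 0 < y (s / r)} := hapos
  have hev : ∀ᶠ s in nhds ρ, 0 < y (s / r) := hopen.mem_nhds hmem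
  have hfe : (deriv (fun t : ℝ => 2 * Real.sqrt (y (t / r)))) =ᶠ[nhds ρ]
      (fun s => deriv y (s / r) / (r * Real.sqrt (y (s / r)))) :=
    hev.mono fun s hs => (hU s hs).deriv
  have hd2 : deriv (deriv (fun t : ℝ => 2 * Real.sqrt (y (t / r)))) ρ =
      deriv (fun s => deriv y (s / r) / (r * Real.sqrt (y (s / r)))) ρ := hfe.deriv_eq
  -- compute deriv g at ρ
  have h1 : HasDerivAt (fun t : ℝ => t / r) (1 / r) ρ := by
    simpa using (hasDerivAt_id ρ).div_const r
  have hn : HasDerivAt (fun s : ℝ => deriv y (s / r)) (c * (1 / r)) ρ :=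
    by have := (hy' x).hasDerivAt.comp ρ h1; exact this
  have hyc : HasDerivAt (fun t : ℝ => y (t / r)) (b * (1 / r)) ρ :=
    (hy x).hasDerivAt.comp ρ h1
  have hsq : HasDerivAt Real.sqrt (1 / (2 * S)) (y x) := Real.hasDerivAt_sqrt hapos.ne'
  have hdd : HasDerivAt (fun s : ℝ => r * Real.sqrt (y (s / r)))
      (r * (1 / (2 * S) * (b * (1 / r)))) ρ := (hsq.comp ρ hyc).const_mul r
  have hdne : r * Real.sqrt (y (ρ / r)) ≠ 0 := by
    have : (ρ : ℝ) / r = x := rfl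
    rw [this, ← hSdef]
    positivity
  have hg : HasDerivAt (fun s => deriv y (s / r) / (r * Real.sqrt (y (s / r))))
      ((c * (1 / r) * (r * Real.sqrt (y (ρ / r))) - b * (r * (1 / (2 * S) * (b * (1 / r))))) /
        (r * Real.sqrt (y (ρ / r))) ^ 2) ρ := hn.div hdd hdne
  have hD : deriv (fun s => deriv y (s / r) / (r * Real.sqrt (y (s / r)))) ρ =
      c / (r ^ 2 * S) - b ^ 2 / (2 * r ^ 2 * S ^ 3) := by
    rw [hg.deriv]
    have hx' : (ρ : ℝ) / r = x := rfl
    rw [hx', ← hSdef]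
    field_simp
  -- first derivative value at ρ
  have hfd : deriv (fun t : ℝ => 2 * Real.sqrt (y (t / r))) ρ = b / (r * S) := by
    rw [(hU ρ hapos).deriv]
  rw [hd2, hD, hfd]
  -- key bound on c
  have hone : 1 - x = (r - ρ) / r := by
    rw [hxdef]; field_simp
  have hcb' : |c| * (r - ρ) ≤ b * r := by
    have h := hcb
    rw [hone] at h
    have h2 : |c| ≤ b * r / (r - ρ) := by
      rw [div_div_eq_mul_div] at h
      exact h
    calc |c| * (r - ρ) ≤ (b * r / (r - ρ)) * (r - ρ) :=
          mul_le_mul_of_nonneg_right h2 hrρ.le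
      _ = b * r := by field_simp
  -- bound the two terms
  have habs : |c / (r ^ 2 * S) - b ^ 2 / (2 * r ^ 2 * S ^ 3)| ≤
      |c| / (r ^ 2 * S) + b ^ 2 / (2 * r ^ 2 * S ^ 3) := by
    refine (abs_sub _ _).trans ?_
    rw [abs_div, abs_div]
    rw [abs_of_nonneg (by positivity : (0:ℝ) ≤ r ^ 2 * S),
        abs_of_nonneg (by positivity : (0:ℝ) ≤ 2 * r ^ 2 * S ^ 3),
        abs_of_nonneg (by positivity : (0:ℝ) ≤ b ^ 2)]
  have ht1 : |c| / (r ^ 2 * S) ≤ b / (r * (r - ρ) * S) := by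
    rw [div_le_div_iff₀ (by positivity) (by positivity)]
    nlinarith [mul_le_mul_of_nonneg_right hcb' (by positivity : (0:ℝ) ≤ r * S)]
  have ht2 : b ^ 2 / (2 * r ^ 2 * S ^ 3) ≤ M * b / (δ * (r * (r - ρ) * S)) := by
    rw [div_le_div_iff₀ (by positivity) (by positivity)]
    have e1 : b ^ 2 ≤ M * b := by nlinarith
    have e2 : r - ρ ≤ r := by linarith
    have key : b ^ 2 * δ * (r - ρ) ≤ M * b * S ^ 2 * r :=
      mul_le_mul (mul_le_mul e1 hδS hδ.le (mul_nonneg hM hb0)) e2 hrρ.le (by positivity)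
    have h := mul_le_mul_of_nonneg_right key (show (0:ℝ) ≤ r * S by positivity)
    have hnn : (0:ℝ) ≤ M * b * (r ^ 2 * S ^ 3) := by positivity
    calc b ^ 2 * (δ * (r * (r - ρ) * S)) = b ^ 2 * δ * (r - ρ) * (r * S) := by ring
      _ ≤ M * b * S ^ 2 * r * (r * S) := h
      _ = M * b * (r ^ 2 * S ^ 3) := by ring
      _ ≤ 2 * (M * b * (r ^ 2 * S ^ 3)) := by linarith
      _ = M * b * (2 * r ^ 2 * S ^ 3) := by ring
  have hsum : b / (r * (r - ρ) * S) + M * b / (δ * (r * (r - ρ) * S)) =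
      (1 + M / δ) * (b / (r * S)) / (r - ρ) := by
    field_simp
  calc |c / (r ^ 2 * S) - b ^ 2 / (2 * r ^ 2 * S ^ 3)|
      ≤ |c| / (r ^ 2 * S) + b ^ 2 / (2 * r ^ 2 * S ^ 3) := habs
    _ ≤ b / (r * (r - ρ) * S) + M * b / (δ * (r * (r - ρ) * S)) := add_le_add ht1 ht2
    _ = (1 + M / δ) * (b / (r * S)) / (r - ρ) := hsum
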